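/- Let δ > 0 with δ ≠ 1, let k be a nonnegative integer, and set s = 1/2 + k. Define g : ℂ → ℂ by g(ω) = ω·((δ² − 1)/δ²)·sin(ω)·[ −2δ·cos(ω)·cos(ωs) + (1 + δ²)·sin(ω)·sin(ωs) ]. Then g(π) = 0, g'(π) = 0, and g''(π) ≠ 0; that is, ω = π is a zero of g of order exactly two. -/

import Mathlib

open Complex

/-- The characteristic function `f̃(ω; δ)` of the symmetric dimer with spacing `s` under the
perfect transmission radiation conditions. -/
noncomputable def gfun (δ s : ℝ) (ω : ℂ) : ℂ :=
  ω * (((δ : ℂ) ^ 2 - 1) / (δ : ℂ) ^ 2) * Complex.sin ω *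
    (-2 * (δ : ℂ) * Complex.cos ω * Complex.cos (ω * (s : ℂ))
      + (1 + (δ : ℂ) ^ 2) * Complex.sin ω * Complex.sin (ω * (s : ℂ)))

noncomputable def Tfun (δ s : ℝ) (ω : ℂ) : ℂ :=
  -2 * (δ : ℂ) * Complex.cos ω * Complex.cos (ω * (s : ℂ))
    + (1 + (δ : ℂ) ^ 2) * Complex.sin ω * Complex.sin (ω * (s : ℂ))

noncomputable def Tfun' (δ s : ℝ) (ω : ℂ) : ℂ :=
  (2 * (δ:ℂ) + (1 + (δ:ℂ)^2) * s) * Complex.sin ω * Complex.cos (ω * (s:ℂ))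
    + (2 * (δ:ℂ) * s + 1 + (δ:ℂ)^2) * Complex.cos ω * Complex.sin (ω * (s:ℂ))

lemma hasDerivAt_Tfun (δ s : ℝ) (ω : ℂ) : HasDerivAt (Tfun δ s) (Tfun' δ s ω) ω := by
  have hms : HasDerivAt (fun ω : ℂ => ω * (s:ℂ)) (s:ℂ) ω := hasDerivAt_mul_const _
  have hcs : HasDerivAt (fun ω : ℂ => Complex.cos (ω * (s:ℂ)))
      (-Complex.sin (ω * (s:ℂ)) * s) ω := by have := (Complex.hasDerivAt_cos (ω * s)).comp ω hms; exact this
  have hss : HasDerivAt (fun ω : ℂ => Complex.sin (ω * (s:ℂ)))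
      (Complex.cos (ω * (s:ℂ)) * s) ω := by have := (Complex.hasDerivAt_sin (ω * s)).comp ω hms; exact this
  have h1 := (((Complex.hasDerivAt_cos ω).const_mul (-2 * (δ:ℂ))).mul hcs).add
      (((Complex.hasDerivAt_sin ω).const_mul (1 + (δ:ℂ)^2)).mul hss)
  have : HasDerivAt (Tfun δ s) _ ω := h1
  convert this using 1
  unfold Tfun'
  ring

noncomputable def Tfun'' (δ s : ℝ) (ω : ℂ) : ℂ :=
  ((2 * (δ:ℂ) + (1 + (δ:ℂ)^2) * s) + (2 * (δ:ℂ) * s + 1 + (δ:ℂ)^2) * s)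
      * Complex.cos ω * Complex.cos (ω * (s:ℂ))
    - ((2 * (δ:ℂ) + (1 + (δ:ℂ)^2) * s) * s + (2 * (δ:ℂ) * s + 1 + (δ:ℂ)^2))
      * Complex.sin ω * Complex.sin (ω * (s:ℂ))

lemma hasDerivAt_Tfun' (δ s : ℝ) (ω : ℂ) : HasDerivAt (Tfun' δ s) (Tfun'' δ s ω) ω := by
  have hms : HasDerivAt (fun ω : ℂ => ω * (s:ℂ)) (s:ℂ) ω := hasDerivAt_mul_const _
  have hcs : HasDerivAt (fun ω : ℂ => Complex.cos (ω * (s:ℂ)))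
      (-Complex.sin (ω * (s:ℂ)) * s) ω := by have := (Complex.hasDerivAt_cos (ω * s)).comp ω hms; exact this
  have hss : HasDerivAt (fun ω : ℂ => Complex.sin (ω * (s:ℂ)))
      (Complex.cos (ω * (s:ℂ)) * s) ω := by have := (Complex.hasDerivAt_sin (ω * s)).comp ω hms; exact this
  have h1 := (((Complex.hasDerivAt_sin ω).const_mul (2 * (δ:ℂ) + (1 + (δ:ℂ)^2) * s)).mul hcs).add
      (((Complex.hasDerivAt_cos ω).const_mul (2 * (δ:ℂ) * s + 1 + (δ:ℂ)^2)).mul hss)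
  have : HasDerivAt (Tfun' δ s) _ ω := h1
  convert this using 1
  unfold Tfun''
  ring

noncomputable def g1fun (δ s : ℝ) (ω : ℂ) : ℂ :=
  (((δ:ℂ)^2 - 1)/(δ:ℂ)^2) * Complex.sin ω * Tfun δ s ω
    + ω * (((δ:ℂ)^2 - 1)/(δ:ℂ)^2) * Complex.cos ω * Tfun δ s ω
    + ω * (((δ:ℂ)^2 - 1)/(δ:ℂ)^2) * Complex.sin ω * Tfun' δ s ω

lemma hasDerivAt_gfun (δ s : ℝ) (ω : ℂ) : HasDerivAt (gfun δ s) (g1fun δ s ω) ω := by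
  have h1 : HasDerivAt (fun ω : ℂ => ω * (((δ:ℂ)^2 - 1)/(δ:ℂ)^2))
      ((((δ:ℂ)^2 - 1)/(δ:ℂ)^2)) ω := hasDerivAt_mul_const _
  have h2 := (h1.mul (Complex.hasDerivAt_sin ω)).mul (hasDerivAt_Tfun δ s ω)
  have : HasDerivAt (gfun δ s) _ ω := h2
  convert this using 1
  unfold g1fun
  simp only [Pi.mul_apply]
  ring

noncomputable def g2fun (δ s : ℝ) (ω : ℂ) : ℂ :=
  2 * (((δ:ℂ)^2 - 1)/(δ:ℂ)^2) * Complex.cos ω * Tfun δ s ω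
    - ω * (((δ:ℂ)^2 - 1)/(δ:ℂ)^2) * Complex.sin ω * Tfun δ s ω
    + 2 * (((δ:ℂ)^2 - 1)/(δ:ℂ)^2) * Complex.sin ω * Tfun' δ s ω
    + 2 * ω * (((δ:ℂ)^2 - 1)/(δ:ℂ)^2) * Complex.cos ω * Tfun' δ s ω
    + ω * (((δ:ℂ)^2 - 1)/(δ:ℂ)^2) * Complex.sin ω * Tfun'' δ s ω

lemma hasDerivAt_g1fun (δ s : ℝ) (ω : ℂ) : HasDerivAt (g1fun δ s) (g2fun δ s ω) ω := by
  set c : ℂ := ((δ:ℂ)^2 - 1)/(δ:ℂ)^2 with hc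
  have hT := hasDerivAt_Tfun δ s ω
  have hT' := hasDerivAt_Tfun' δ s ω
  have ha : HasDerivAt (fun ω : ℂ => c * Complex.sin ω)
      (c * Complex.cos ω) ω := (Complex.hasDerivAt_sin ω).const_mul c
  have hb : HasDerivAt (fun ω : ℂ => ω * c) c ω := hasDerivAt_mul_const _
  have h := ((ha.mul hT).add (((hb.mul (Complex.hasDerivAt_cos ω)).mul hT))).add
      (((hb.mul (Complex.hasDerivAt_sin ω)).mul hT'))
  have : HasDerivAt (g1fun δ s) _ ω := h
  convert this using 1
  unfold g2fun
  simp only [Pi.mul_apply, hc]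
  ring


lemma cos_pi_mul_s (k : ℕ) : Complex.cos ((Real.pi:ℂ) * ((1/2 + k : ℝ):ℂ)) = 0 := by
  have h : (Real.pi:ℂ) * ((1/2 + k : ℝ):ℂ) = ((Real.pi/2 + k * Real.pi : ℝ):ℂ) := by
    push_cast; ring
  rw [h, ← Complex.ofReal_cos]
  have : Real.cos (Real.pi/2 + (k:ℤ) * Real.pi) = (-1)^(k:ℤ) * Real.cos (Real.pi/2) :=
    Real.cos_add_int_mul_pi _ _
  push_cast at this
  rw [this]
  simp

lemma sin_pi_mul_s (k : ℕ) : Complex.sin ((Real.pi:ℂ) * ((1/2 + k : ℝ):ℂ)) = (-1)^k := by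
  have h : (Real.pi:ℂ) * ((1/2 + k : ℝ):ℂ) = ((Real.pi/2 + k * Real.pi : ℝ):ℂ) := by
    push_cast; ring
  rw [h, ← Complex.ofReal_sin]
  have : Real.sin (Real.pi/2 + (k:ℤ) * Real.pi) = (-1)^(k:ℤ) * Real.sin (Real.pi/2) :=
    Real.sin_add_int_mul_pi _ _
  push_cast at this
  rw [this]
  simp

/-- For `s = 1/2 + k` with `k ∈ ℤ≥0`, `ω = π` is a zero of order exactly two of `g = f̃(·; δ)`:
an exact exceptional point for every `δ > 0`, `δ ≠ 1`. -/
theorem stmt_8 (δ : ℝ) (hδ : 0 < δ) (hδ1 : δ ≠ 1) (k : ℕ) :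
    gfun δ (1 / 2 + k) (Real.pi : ℂ) = 0 ∧
    deriv (gfun δ (1 / 2 + k)) (Real.pi : ℂ) = 0 ∧
    iteratedDeriv 2 (gfun δ (1 / 2 + k)) (Real.pi : ℂ) ≠ 0 := by
  have hcs := cos_pi_mul_s k
  have hss := sin_pi_mul_s k
  have hT0 : Tfun δ (1/2 + k) (Real.pi : ℂ) = 0 := by
    unfold Tfun
    rw [Complex.sin_pi, hcs]
    ring
  refine ⟨?_, ?_, ?_⟩
  · unfold gfun
    rw [Complex.sin_pi]
    ring
  · have hderiv : deriv (gfun δ (1/2 + k)) = g1fun δ (1/2 + k) :=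
      funext fun x => (hasDerivAt_gfun δ (1/2+k) x).deriv
    rw [hderiv]
    unfold g1fun
    rw [Complex.sin_pi, hT0]
    ring
  · have hderiv : deriv (gfun δ (1/2 + k)) = g1fun δ (1/2 + k) :=
      funext fun x => (hasDerivAt_gfun δ (1/2+k) x).deriv
    rw [show (2:ℕ) = 1 + 1 from rfl, iteratedDeriv_succ, iteratedDeriv_one, hderiv,
      (hasDerivAt_g1fun δ (1/2+k) (Real.pi:ℂ)).deriv]
    have hval : g2fun δ (1/2 + k) (Real.pi : ℂ)
        = 2 * (Real.pi:ℂ) * (((δ:ℂ)^2 - 1)/(δ:ℂ)^2)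
            * (2*(δ:ℂ)*((1/2 + k : ℝ):ℂ) + 1 + (δ:ℂ)^2) * (-1)^k := by
      simp only [g2fun, Tfun, Tfun', hT0, Complex.sin_pi, Complex.cos_pi, hcs, hss]
      ring
    rw [hval]
    have hδ0 : (δ:ℂ) ≠ 0 := by exact_mod_cast hδ.ne'
    have hδsq : (δ:ℂ)^2 - 1 ≠ 0 := by
      have : δ^2 ≠ 1 := by
        intro h
        rcases lt_or_gt_of_ne hδ1 with h' | h' <;> nlinarith
      intro h
      apply this
      have : ((δ^2 : ℝ):ℂ) = ((1:ℝ):ℂ) := by push_cast; linear_combination h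
      exact_mod_cast this
    have hB : (2*(δ:ℂ)*((1/2 + k : ℝ):ℂ) + 1 + (δ:ℂ)^2) ≠ 0 := by
      have h1 : (0:ℝ) < 2*δ*(1/2 + k) + 1 + δ^2 := by positivity
      have h2 : (2*(δ:ℂ)*((1/2 + k : ℝ):ℂ) + 1 + (δ:ℂ)^2)
          = ((2*δ*(1/2 + k) + 1 + δ^2 : ℝ):ℂ) := by push_cast; ring
      rw [h2]
      exact_mod_cast h1.ne'
    apply mul_ne_zero
    apply mul_ne_zero
    apply mul_ne_zero
    · exact mul_ne_zero two_ne_zero (by exact_mod_cast Real.pi_ne_zero)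
    · exact div_ne_zero hδsq (pow_ne_zero _ hδ0)
    · exact hB
    · exact pow_ne_zero _ (by norm_num)
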